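/- Let a, b > 0 with a ≠ 1 and set L = ln b / ln a. Suppose w : (0,∞) → ℝ satisfies w(a·y) = −b·w(y) for all y > 0, and suppose that either lim_{y→0+} y^{−L}·w(y) = 0 or lim_{y→∞} y^{−L}·w(y) = 0. Then w(y) = 0 for all y > 0. -/

import Mathlib

open Set Filter

noncomputable section

/-- A utility function: `C²` on `(0,∞)`, strictly increasing and strictly concave there,
satisfying the Inada conditions. -/
def IsUtility (U : ℝ → ℝ) : Prop :=
  ContDiffOn ℝ 2 U (Set.Ioi 0) ∧
  (∀ x > 0, 0 < deriv U x) ∧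
  (∀ x > 0, deriv (deriv U) x < 0) ∧
  Tendsto (deriv U) (nhdsWithin 0 (Set.Ioi 0)) atTop ∧
  Tendsto (deriv U) atTop (nhds 0)

/-- An inverse marginal function: positive, `C¹` on `(0,∞)`, strictly decreasing derivative,
with `I(∞)=0` and `I(0+)=∞`. -/
def IsInvMarginal (I : ℝ → ℝ) : Prop :=
  (∀ y > 0, 0 < I y) ∧
  ContDiffOn ℝ 1 I (Set.Ioi 0) ∧
  (∀ y > 0, deriv I y < 0) ∧
  Tendsto I atTop (nhds 0) ∧
  Tendsto I (nhdsWithin 0 (Set.Ioi 0)) atTop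

/-- `I` is the inverse of the marginal `U'` on the positive reals: `I = (U')⁻¹`. -/
def InvMarginalOf (I U : ℝ → ℝ) : Prop :=
  (∀ x > 0, I (deriv U x) = x) ∧ (∀ y > 0, 0 < I y ∧ deriv U (I y) = y)

/-- `J` is the inverse function of `I` on the positive reals. -/
def IsInverseOf (J I : ℝ → ℝ) : Prop :=
  (∀ y > 0, J (I y) = y) ∧ (∀ x > 0, 0 < J x ∧ I (J x) = x)

/-- The single-period inverse investment problem:
`U₀(x) = sup {p·U₁(x+π(u−1)) + (1−p)·U₁(x+π(d−1)) : −x/(u−1) ≤ π ≤ x/(1−d)}` for all `x > 0`. -/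
def SPIIP (u d p : ℝ) (U₀ U₁ : ℝ → ℝ) : Prop :=
  ∀ x > 0, U₀ x =
    sSup ((fun pi => p * U₁ (x + pi * (u - 1)) + (1 - p) * U₁ (x + pi * (d - 1))) ''
      Set.Icc (-(x / (u - 1))) (x / (1 - d)))

/-- If `w(a·y) = −b·w(y)` on `(0,∞)` and `y^{−L}·w(y)` tends to `0` either as
`y → 0⁺` or as `y → ∞`, where `L = log_a b`, then `w ≡ 0` on `(0,∞)`. -/
theorem stmt10
    (a b L : ℝ) (ha0 : 0 < a) (hb0 : 0 < b) (ha1 : a ≠ 1)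
    (hL : L = Real.log b / Real.log a)
    (w : ℝ → ℝ)
    (hw : ∀ y > 0, w (a * y) = -b * w y)
    (hlim : Tendsto (fun y => y ^ (-L) * w y) (nhdsWithin 0 (Set.Ioi 0)) (nhds 0) ∨
            Tendsto (fun y => y ^ (-L) * w y) atTop (nhds 0)) :
    ∀ y > 0, w y = 0 := by
  have hla : Real.log a ≠ 0 := by
    simpa using Real.log_ne_zero_of_pos_of_ne_one ha0 ha1
  have haL : a ^ L = b := by
    rw [hL, Real.rpow_def_of_pos ha0, mul_comm, div_mul_cancel₀ _ hla, Real.exp_log hb0]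
  set g : ℝ → ℝ := fun y => y ^ (-L) * w y with hg_def
  have hg : ∀ y > 0, g (a * y) = -(g y) := by
    intro y hy
    have h1 : (a * y) ^ (-L) = a ^ (-L) * y ^ (-L) := Real.mul_rpow ha0.le hy.le
    have h2 : a ^ (-L) = b⁻¹ := by rw [Real.rpow_neg ha0.le, haL]
    simp only [hg_def, h1, h2, hw y hy]
    field_simp
  have habs_up : ∀ y > 0, ∀ n : ℕ, |g (a ^ n * y)| = |g y| := by
    intro y hy n
    induction n with
    | zero => simp
    | succ n ih =>
      have hpos : 0 < a ^ n * y := by positivity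
      rw [pow_succ, mul_comm (a^n) a, mul_assoc, hg _ hpos, abs_neg, ih]
  have habs_dn : ∀ y > 0, ∀ n : ℕ, |g (y / a ^ n)| = |g y| := by
    intro y hy n
    induction n with
    | zero => simp
    | succ n ih =>
      have hpos : 0 < y / a ^ (n+1) := by positivity
      have key : a * (y / a ^ (n+1)) = y / a ^ n := by
        field_simp; ring
      have := hg _ hpos
      rw [key] at this
      rw [← ih, this, abs_neg]
  intro y hy
  have hcore : |g y| = 0 := by
    obtain ⟨s, hs_abs, hs_tend⟩ :
        ∃ s : ℕ → ℝ, (∀ n, |g (s n)| = |g y|) ∧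
          Tendsto (fun n => g (s n)) atTop (nhds 0) := by
      rcases lt_or_gt_of_ne ha1 with hlt | hgt
      · rcases hlim with h0 | hinf
        · refine ⟨fun n => a ^ n * y, fun n => habs_up y hy n, ?_⟩
          refine h0.comp ?_
          apply tendsto_nhdsWithin_of_tendsto_nhds_of_eventually_within
          · have : Tendsto (fun n : ℕ => (a:ℝ) ^ n) atTop (nhds 0) :=
              tendsto_pow_atTop_nhds_zero_of_lt_one ha0.le hlt
            simpa using this.mul_const y
          · filter_upwards with n
            have : 0 < a ^ n * y := by positivity
            exact this
        · refine ⟨fun n => y / a ^ n, fun n => habs_dn y hy n, ?_⟩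
          refine hinf.comp ?_
          have h1 : (1:ℝ) < a⁻¹ := (one_lt_inv₀ ha0).mpr hlt
          have h2 : Tendsto (fun n : ℕ => (a⁻¹:ℝ) ^ n) atTop atTop :=
            tendsto_pow_atTop_atTop_of_one_lt h1
          have := h2.const_mul_atTop hy
          simpa [div_eq_mul_inv, inv_pow] using this
      · rcases hlim with h0 | hinf
        · refine ⟨fun n => y / a ^ n, fun n => habs_dn y hy n, ?_⟩
          refine h0.comp ?_
          apply tendsto_nhdsWithin_of_tendsto_nhds_of_eventually_within
          · have h2 : Tendsto (fun n : ℕ => (a:ℝ) ^ n) atTop atTop :=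
              tendsto_pow_atTop_atTop_of_one_lt hgt
            have := h2.inv_tendsto_atTop.const_mul y
            simpa [div_eq_mul_inv] using this
          · filter_upwards with n
            have : 0 < y / a ^ n := by positivity
            exact this
        · refine ⟨fun n => a ^ n * y, fun n => habs_up y hy n, ?_⟩
          refine hinf.comp ?_
          exact (tendsto_pow_atTop_atTop_of_one_lt hgt).atTop_mul_const hy
    have h1 : Tendsto (fun n => |g (s n)|) atTop (nhds 0) := by
      simpa using hs_tend.abs
    have h2 : Tendsto (fun n => |g (s n)|) atTop (nhds |g y|) := by
      simp only [hs_abs]; exact tendsto_const_nhds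
    exact (tendsto_nhds_unique h2 h1)
  have hg0 : g y = 0 := abs_eq_zero.mp hcore
  have hyne : y ^ (-L) ≠ 0 := (Real.rpow_pos_of_pos hy _).ne'
  have : y ^ (-L) * w y = 0 := hg0
  exact (mul_eq_zero.mp this).resolve_left hyne
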